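/- For the friendship graph F_n, the super domination number equals n+1. -/

import Mathlib

/-- `S` is a super dominating set of `G`: it is dominating, and for every `u ∉ S`
there is `v ∈ S` whose neighbours outside `S` are exactly `{u}`. -/
def IsSuperDominatingSet {V : Type*} (G : SimpleGraph V) (S : Finset V) : Prop :=
  (∀ u ∉ S, ∃ v ∈ S, G.Adj v u) ∧
  ∀ u ∉ S, ∃ v ∈ S, ∀ w, (G.Adj v w ∧ w ∉ S) ↔ w = u

/-- The super domination number of `G`. -/
noncomputable def superDominationNumber {V : Type*} [Fintype V] (G : SimpleGraph V) : ℕ :=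
  sInf {n | ∃ S : Finset V, IsSuperDominatingSet G S ∧ S.card = n}

/-- The friendship graph `F_n`: `n` triangles sharing the common center `none`. -/
def friendshipGraph (n : ℕ) : SimpleGraph (Option (Fin n × Fin 2)) :=
  SimpleGraph.fromRel (fun u w =>
    u = none ∨ ∃ p q : Fin n × Fin 2, u = some p ∧ w = some q ∧ p.1 = q.1)

lemma fin2_cases (j : Fin 2) : j = 0 ∨ j = 1 := by revert j; decide

lemma friendship_lower (n : ℕ) (S : Finset (Option (Fin n × Fin 2)))
    (hS : IsSuperDominatingSet (friendshipGraph n) S) : n + 1 ≤ S.card := by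
  classical
  obtain ⟨-, h2⟩ := hS
  have key : Sᶜ.card ≤ S.card := by
    apply Finset.card_le_card_of_injOn
      (fun u => if h : u ∉ S then (h2 u h).choose else none)
    · intro u hu
      rw [Finset.mem_coe, Finset.mem_compl] at hu
      simp only [dif_pos hu]
      exact (h2 u hu).choose_spec.1
    · intro u hu u' hu' heq
      rw [Finset.coe_compl, Set.mem_compl_iff, Finset.mem_coe] at hu hu'
      simp only [dif_pos hu, dif_pos hu'] at heq
      obtain ⟨hv, hiff⟩ := (h2 u hu).choose_spec
      obtain ⟨hv', hiff'⟩ := (h2 u' hu').choose_spec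
      have h1 : (friendshipGraph n).Adj (h2 u hu).choose u ∧ u ∉ S := (hiff u).mpr rfl
      rw [heq] at h1
      exact (hiff' u).mp h1
  have hcard : Sᶜ.card = Fintype.card (Option (Fin n × Fin 2)) - S.card := Finset.card_compl S
  have htot : Fintype.card (Option (Fin n × Fin 2)) = 2 * n + 1 := by
    simp [Fintype.card_option, Fintype.card_prod, mul_comm]
  have hle : S.card ≤ Fintype.card (Option (Fin n × Fin 2)) := S.card_le_univ
  omega

lemma friendship_upper (n : ℕ) :
    ∃ S : Finset (Option (Fin n × Fin 2)),
      IsSuperDominatingSet (friendshipGraph n) S ∧ S.card = n + 1 := by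
  classical
  set S : Finset (Option (Fin n × Fin 2)) :=
    insert none ((Finset.univ : Finset (Fin n)).image (fun i => some (i, 0))) with hSdef
  have hnone : (none : Option (Fin n × Fin 2)) ∈ S := Finset.mem_insert_self _ _
  have hsome0 : ∀ i : Fin n, (some (i, 0) : Option (Fin n × Fin 2)) ∈ S := by
    intro i
    exact Finset.mem_insert_of_mem (Finset.mem_image.mpr ⟨i, Finset.mem_univ _, rfl⟩)
  have hmem : ∀ u, u ∉ S ↔ ∃ i : Fin n, u = some (i, 1) := by
    intro u
    match u with
    | none => simp [hnone]
    | some (i, j) =>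
      rcases fin2_cases j with rfl | rfl
      · constructor
        · intro h; exact absurd (hsome0 i) h
        · rintro ⟨i', h⟩
          simp only [Option.some.injEq, Prod.mk.injEq] at h
          exact absurd h.2 (by decide)
      · constructor
        · intro _; exact ⟨i, rfl⟩
        · intro _ hmem
          rw [hSdef] at hmem
          rcases Finset.mem_insert.mp hmem with h | h
          · exact Option.some_ne_none _ h
          · obtain ⟨a, -, ha⟩ := Finset.mem_image.mp h
            simp only [Option.some.injEq, Prod.mk.injEq] at ha
            exact absurd ha.2 (by decide)
  have adj_center : ∀ p : Fin n × Fin 2, (friendshipGraph n).Adj none (some p) := by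
    intro p
    rw [friendshipGraph, SimpleGraph.fromRel_adj]
    exact ⟨by simp, Or.inl (Or.inl rfl)⟩
  have adj_pair : ∀ i : Fin n, (friendshipGraph n).Adj (some (i, 0)) (some (i, 1)) := by
    intro i
    rw [friendshipGraph, SimpleGraph.fromRel_adj]
    refine ⟨?_, Or.inl (Or.inr ⟨(i, 0), (i, 1), rfl, rfl, rfl⟩)⟩
    simp only [ne_eq, Option.some.injEq, Prod.mk.injEq, not_and]
    intro _; decide
  have adj_char : ∀ (i : Fin n) (w), (friendshipGraph n).Adj (some (i, 0)) w →
      w = none ∨ w = some (i, 1) := by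
    intro i w hadj
    rw [friendshipGraph, SimpleGraph.fromRel_adj] at hadj
    obtain ⟨hne, h⟩ := hadj
    rcases h with h | h
    · rcases h with h | ⟨p, q, hp, hq, hpq⟩
      · exact absurd h (Option.some_ne_none _)
      · right
        obtain rfl : p = (i, 0) := (Option.some_injective _ hp).symm
        obtain ⟨i', j'⟩ := q
        obtain rfl : i' = i := hpq.symm
        rcases fin2_cases j' with rfl | rfl
        · exact absurd hq.symm hne
        · exact hq
    · rcases h with h | ⟨p, q, hp, hq, hpq⟩
      · left; exact h
      · right
        obtain rfl : q = (i, 0) := (Option.some_injective _ hq).symm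
        obtain ⟨i', j'⟩ := p
        obtain rfl : i' = i := hpq
        rcases fin2_cases j' with rfl | rfl
        · exact absurd hp.symm hne
        · exact hp
  refine ⟨S, ⟨?_, ?_⟩, ?_⟩
  · intro u hu
    obtain ⟨i, rfl⟩ := (hmem u).mp hu
    exact ⟨none, hnone, adj_center _⟩
  · intro u hu
    obtain ⟨i, rfl⟩ := (hmem u).mp hu
    refine ⟨some (i, 0), hsome0 i, fun w => ⟨?_, ?_⟩⟩
    · rintro ⟨hadj, hw⟩
      rcases adj_char i w hadj with rfl | rfl
      · exact absurd hnone hw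
      · rfl
    · rintro rfl
      exact ⟨adj_pair i, (hmem _).mpr ⟨i, rfl⟩⟩
  · rw [hSdef, Finset.card_insert_of_notMem, Finset.card_image_of_injective _
      (fun a b h => by simpa using h), Finset.card_univ,
      Fintype.card_fin, Nat.add_comm]
    simp

theorem stmt_6 (n : ℕ) :
    superDominationNumber (friendshipGraph n) = n + 1 := by
  obtain ⟨S, hS, hcard⟩ := friendship_upper n
  have hmem : (n + 1) ∈ {m | ∃ S : Finset (Option (Fin n × Fin 2)),
      IsSuperDominatingSet (friendshipGraph n) S ∧ S.card = m} := ⟨S, hS, hcard⟩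
  have hle : superDominationNumber (friendshipGraph n) ≤ n + 1 := Nat.sInf_le hmem
  have hmem' := Nat.sInf_mem (⟨n + 1, hmem⟩ : Set.Nonempty _)
  obtain ⟨T, hT, hTc⟩ := hmem'
  have := friendship_lower n T hT
  unfold superDominationNumber at *
  omega
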